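/- Let ω be a weight function that is slowly varying, i.e. ω(ut)/ω(t) → 1 as t → ∞ for each u > 0. Then γ(ω) = +∞, where γ(ω) := sup{γ > 0 : ∃ K > 1 with limsup_{t→∞} ω(K^γ t)/ω(t) < K}. In particular ω cannot satisfy the condition (ω₆): ∃ H ≥ 1 ∀ t ≥ 0: 2ω(t) ≤ ω(Ht) + H. -/
import Mathlib


open Filter

/-- property (P_{ω,γ}): ∃ K > 1 with limsup_{t→∞} ω(K^γ t)/ω(t) < K. -/
def Pgamma (ω : ℝ → ℝ) (γ : ℝ) : Prop :=
  ∃ K : ℝ, 1 < K ∧ Filter.limsup (fun t : ℝ => ω (K ^ γ * t) / ω t) atTop < K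

/-- Growth index γ(ω) := sup{γ > 0 : (P_{ω,γ})} with γ(ω) = 0 if no such γ exists. -/
noncomputable def gammaLower (ω : ℝ → ℝ) : EReal :=
  sSup (insert (0 : EReal) ((fun γ : ℝ => (γ : EReal)) '' {γ : ℝ | 0 < γ ∧ Pgamma ω γ}))

/-- If a weight function ω is slowly varying then γ(ω) = +∞; in particular
ω cannot satisfy (ω₆): ∃ H ≥ 1, ∀ t ≥ 0, 2ω(t) ≤ ω(Ht) + H. -/
theorem stmt19 (ω : ℝ → ℝ)
    (hnn : ∀ t : ℝ, 0 ≤ t → 0 ≤ ω t)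
    (hmono : MonotoneOn ω (Set.Ici 0))
    (htend : Tendsto ω atTop atTop)
    (hslow : ∀ u : ℝ, 0 < u →
      Tendsto (fun t : ℝ => ω (u * t) / ω t) atTop (nhds 1)) :
    gammaLower ω = ⊤ ∧
      ¬ (∃ H : ℝ, 1 ≤ H ∧ ∀ t : ℝ, 0 ≤ t → 2 * ω t ≤ ω (H * t) + H) := by
  have hP : ∀ γ : ℝ, 0 < γ → Pgamma ω γ := by
    intro γ hγ
    refine ⟨2, one_lt_two, ?_⟩
    have h2 : (0:ℝ) < (2:ℝ) ^ γ := Real.rpow_pos_of_pos two_pos γ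
    have := (hslow ((2:ℝ) ^ γ) h2).limsup_eq
    rw [this]
    exact one_lt_two
  constructor
  · rw [gammaLower, sSup_eq_top]
    intro b hb
    obtain ⟨x, hbx, -⟩ := EReal.lt_iff_exists_real_btwn.mp hb
    refine ⟨((max x 1 : ℝ) : EReal), ?_, ?_⟩
    · exact Set.mem_insert_iff.mpr (Or.inr ⟨max x 1,
        ⟨lt_of_lt_of_le one_pos (le_max_right x 1), hP _ (lt_of_lt_of_le one_pos (le_max_right x 1))⟩, rfl⟩)
    · exact lt_of_lt_of_le hbx (by exact_mod_cast le_max_left x 1)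
  · rintro ⟨H, hH, hω6⟩
    have hHpos : (0:ℝ) < H := lt_of_lt_of_le one_pos hH
    have hlim := hslow H hHpos
    have hev : ∀ᶠ t in (atTop : Filter ℝ), (3/2 : ℝ) ≤ ω (H * t) / ω t := by
      filter_upwards [htend.eventually_ge_atTop (2 * H), eventually_ge_atTop (0:ℝ)]
        with t hωt ht
      have hωpos : 0 < ω t := lt_of_lt_of_le (by linarith) hωt
      have key : 2 * ω t ≤ ω (H * t) + H := hω6 t ht
      rw [le_div_iff₀ hωpos]
      linarith
    have : (3/2 : ℝ) ≤ 1 := ge_of_tendsto hlim hev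
    linarith
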